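/- For every function f : ω₂^{<ω} → ω₂ and every stationary set T ⊆ ω₁, there exists a countable X ⊆ ω₂ closed under f such that X ∩ ω₁ is (the set of predecessors of) an ordinal α with α ∈ T, and for cofinally many β < ω₂ with β ∉ X, the set cl_f(X ∪ {β}) — the smallest subset of ω₂ containing X ∪ {β} and closed under f — satisfies cl_f(X ∪ {β}) ∩ ω₁ = X ∩ ω₁. -/

import Mathlib

noncomputable section

open Cardinal

/-- The first uncountable cardinal, as an ordinal. -/
def omega1 : Ordinal.{0} := (aleph 1).ord

/-- The second uncountable cardinal, as an ordinal. -/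
def omega2 : Ordinal.{0} := (aleph 2).ord

/-- `X` is closed under `f : A^{<ω} → A` (modelled on all finite sequences of ordinals):
`f s ∈ X` for every finite sequence `s` of elements of `X`. -/
def ClosedUnder (f : List Ordinal.{0} → Ordinal) (X : Set Ordinal.{0}) : Prop :=
  ∀ s : List Ordinal.{0}, (∀ x ∈ s, x ∈ X) → f s ∈ X

/-- `f` maps finite sequences of ordinals below `A` to ordinals below `A`,
i.e. `f` codes a function `A^{<ω} → A`. -/
def IntoBelow (A : Ordinal.{0}) (f : List Ordinal.{0} → Ordinal) : Prop :=
  ∀ s : List Ordinal.{0}, (∀ x ∈ s, x < A) → f s < A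

/-- `S` is stationary in `[A]^ω`: for every `f : A^{<ω} → A` there is a countable
`X ⊆ A` closed under `f` with `X ∈ S`. -/
def StationaryIn (A : Ordinal.{0}) (S : Set (Set Ordinal.{0})) : Prop :=
  ∀ f : List Ordinal.{0} → Ordinal, IntoBelow A f →
    ∃ X : Set Ordinal.{0}, X.Countable ∧ (∀ x ∈ X, x < A) ∧ ClosedUnder f X ∧ X ∈ S

/-- The weak reflection principle `WRP(ω₂)`: every stationary `S ⊆ [ω₂]^ω` reflects
to `[λ]^ω` for some `ω₁ ≤ λ < ω₂`. -/
def WRP2 : Prop :=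
  ∀ S : Set (Set Ordinal.{0}),
    (∀ X ∈ S, X.Countable ∧ ∀ x ∈ X, x < omega2) →
    StationaryIn omega2 S →
    ∃ lam : Ordinal.{0}, omega1 ≤ lam ∧ lam < omega2 ∧
      StationaryIn lam {X | X ∈ S ∧ ∀ x ∈ X, x < lam}

/-- `C` is a club subset of `ω₁`: a set of ordinals below `ω₁`, unbounded in `ω₁`,
and closed under suprema of its nonempty subsets that are bounded below `ω₁`. -/
def ClubInOmega1 (C : Set Ordinal.{0}) : Prop :=
  (∀ o ∈ C, o < omega1) ∧
  (∀ a < omega1, ∃ b ∈ C, a < b) ∧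
  (∀ D : Set Ordinal.{0}, D ⊆ C → D.Nonempty → (∃ b < omega1, ∀ x ∈ D, x ≤ b) → sSup D ∈ C)

/-- `T` is stationary in `ω₁`: `T ⊆ ω₁` meets every club subset of `ω₁`. -/
def StationaryInOmega1 (T : Set Ordinal.{0}) : Prop :=
  (∀ o ∈ T, o < omega1) ∧ ∀ C : Set Ordinal.{0}, ClubInOmega1 C → (T ∩ C).Nonempty

/-- `clf f Z`: the smallest set of ordinals containing `Z` and closed under `f`. -/
def clf (f : List Ordinal.{0} → Ordinal) (Z : Set Ordinal.{0}) : Set Ordinal.{0} :=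
  ⋂₀ {W : Set Ordinal.{0} | Z ⊆ W ∧ ClosedUnder f W}

end


noncomputable section
open Cardinal Set

namespace PAux

variable (f : List Ordinal.{0} → Ordinal.{0})

/-- iterative closure of `Z` under `f`. -/
def iter (Z : Set Ordinal.{0}) : ℕ → Set Ordinal.{0}
  | 0 => Z
  | n+1 => iter Z n ∪ f '' {s : List Ordinal.{0} | ∀ x ∈ s, x ∈ iter Z n}

def cl (Z : Set Ordinal.{0}) : Set Ordinal.{0} := ⋃ n, iter f Z n

variable {f}

lemma iter_mono {Z : Set Ordinal.{0}} : Monotone (iter f Z) := by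
  apply monotone_nat_of_le_succ
  intro n
  exact subset_union_left

lemma subset_cl {Z : Set Ordinal.{0}} : Z ⊆ cl f Z :=
  (subset_iUnion (iter f Z) 0)

lemma exists_iter_of_list {Z : Set Ordinal.{0}} {s : List Ordinal.{0}}
    (hs : ∀ x ∈ s, x ∈ cl f Z) : ∃ n, ∀ x ∈ s, x ∈ iter f Z n := by
  induction s with
  | nil => exact ⟨0, by simp⟩
  | cons a l ih =>
    obtain ⟨n, hn⟩ := ih (fun x hx => hs x (List.mem_cons_of_mem _ hx))
    obtain ⟨m, hm⟩ := mem_iUnion.1 (hs a List.mem_cons_self)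
    refine ⟨max n m, fun x hx => ?_⟩
    rcases List.mem_cons.1 hx with rfl | hx
    · exact iter_mono (le_max_right n m) hm
    · exact iter_mono (le_max_left n m) (hn x hx)

lemma closed_cl {Z : Set Ordinal.{0}} : ClosedUnder f (cl f Z) := by
  intro s hs
  obtain ⟨n, hn⟩ := exists_iter_of_list hs
  exact mem_iUnion.2 ⟨n+1, Or.inr ⟨s, hn, rfl⟩⟩

lemma cl_min {Z W : Set Ordinal.{0}} (hZW : Z ⊆ W) (hW : ClosedUnder f W) :
    cl f Z ⊆ W := by
  refine iUnion_subset fun n => ?_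
  induction n with
  | zero => exact hZW
  | succ n ih =>
    refine union_subset ih ?_
    rintro y ⟨s, hs, rfl⟩
    exact hW s fun x hx => ih (hs x hx)

lemma cl_mono {Z Z' : Set Ordinal.{0}} (h : Z ⊆ Z') : cl f Z ⊆ cl f Z' :=
  cl_min (h.trans subset_cl) closed_cl

lemma countable_lists {A : Set Ordinal.{0}} (hA : A.Countable) :
    {s : List Ordinal.{0} | ∀ x ∈ s, x ∈ A}.Countable := by
  have : Countable ↥A := hA.to_subtype
  have he : {s : List Ordinal.{0} | ∀ x ∈ s, x ∈ A}
      = Set.range (fun l : List ↥A => l.map Subtype.val) := by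
    ext l
    constructor
    · intro hl
      refine ⟨l.pmap (fun x hx => (⟨x, hl x hx⟩ : ↥A)) (fun _ h => h), ?_⟩
      simp [List.map_pmap]
    · rintro ⟨l', rfl⟩ x hx
      simp only [List.mem_map] at hx
      obtain ⟨a, _, rfl⟩ := hx
      exact a.2
  rw [he]
  exact countable_range _

lemma cl_countable {Z : Set Ordinal.{0}} (hZ : Z.Countable) : (cl f Z).Countable := by
  refine countable_iUnion fun n => ?_
  induction n with
  | zero => exact hZ
  | succ n ih => exact ih.union ((countable_lists ih).image f)

lemma iter_lt {Z : Set Ordinal.{0}} {A : Ordinal.{0}} (hf : IntoBelow A f)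
    (hZ : ∀ x ∈ Z, x < A) : ∀ n, ∀ x ∈ iter f Z n, x < A := by
  intro n
  induction n with
  | zero => exact hZ
  | succ n ih =>
    rintro x (hx | ⟨s, hs, rfl⟩)
    · exact ih x hx
    · exact hf s fun y hy => ih y (hs y hy)

lemma cl_lt {Z : Set Ordinal.{0}} {A : Ordinal.{0}} (hf : IntoBelow A f)
    (hZ : ∀ x ∈ Z, x < A) : ∀ x ∈ cl f Z, x < A := by
  intro x hx
  obtain ⟨n, hn⟩ := mem_iUnion.1 hx
  exact iter_lt hf hZ n x hn

lemma lt_succ' (x : Ordinal.{0}) : x < x + 1 := by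
  rw [Ordinal.add_one_eq_succ]; exact Order.lt_succ x

lemma omega1_lt_omega2 : omega1 < omega2 :=
  Cardinal.ord_lt_ord.2 (aleph_lt_aleph.2 one_lt_two)

lemma omega1_isLimit : Order.IsSuccLimit omega1 := Cardinal.isSuccLimit_ord (aleph0_le_aleph 1)
lemma omega2_isLimit : Order.IsSuccLimit omega2 := Cardinal.isSuccLimit_ord (aleph0_le_aleph 2)

lemma isRegular_aleph_two : Cardinal.IsRegular (aleph 2) := by
  have h := isRegular_aleph_succ 1
  rwa [show Order.succ (1 : Ordinal) = 2 by rw [← Ordinal.add_one_eq_succ, one_add_one_eq_two]] at h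

lemma Iio_countable {i : Ordinal.{0}} (h : i < omega1) : (Iio i).Countable := by
  rw [countable_iff_lt_aleph_one, Ordinal.mk_Iio_ordinal]
  rw [show (ℵ₁ : Cardinal.{1}) = lift.{1} (ℵ₁ : Cardinal.{0}) from by
    rw [lift_aleph]; norm_num, Cardinal.lift_lt]
  exact Cardinal.lt_ord.1 h

lemma sSup_lt_omega1 {S : Set Ordinal.{0}} (hc : S.Countable)
    (hS : ∀ x ∈ S, x < omega1) : sSup S < omega1 := by
  rcases S.eq_empty_or_nonempty with rfl | hne
  · simpa using omega1_isLimit.pos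
  · obtain ⟨g, rfl⟩ := hc.exists_eq_range hne
    have h : sSup (Set.range g) = ⨆ n, g n := rfl
    rw [h]
    refine Ordinal.iSup_lt_ord ?_ fun n => hS _ (mem_range_self n)
    rw [Cardinal.mk_nat, omega1, Cardinal.isRegular_aleph_one.cof_eq]
    exact aleph0_lt_aleph_one

lemma sSup_lt_omega2 {S : Set Ordinal.{0}} (hc : S.Countable)
    (hS : ∀ x ∈ S, x < omega2) : sSup S < omega2 := by
  rcases S.eq_empty_or_nonempty with rfl | hne
  · simpa using omega2_isLimit.pos
  · obtain ⟨g, rfl⟩ := hc.exists_eq_range hne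
    have h : sSup (Set.range g) = ⨆ n, g n := rfl
    rw [h]
    refine Ordinal.iSup_lt_ord ?_ fun n => hS _ (mem_range_self n)
    rw [Cardinal.mk_nat, omega2, isRegular_aleph_two.cof_eq]
    exact aleph0_lt_aleph_one.trans (aleph_lt_aleph.2 one_lt_two)

/-- a bound below `ω₂` for `ω₁` many values below `ω₂`. -/
lemma bound2 (g : Ordinal.{0} → Ordinal.{0}) (hg : ∀ j, g j < omega2) :
    ∃ b, b < omega2 ∧ ∀ j < omega1, g j ≤ b := by
  set F : omega1.ToType → Ordinal.{0} :=
    fun x => g ((Ordinal.ToType.mk (o := omega1)).symm x).1 with hF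
  refine ⟨⨆ x, F x, ?_, ?_⟩
  · refine Ordinal.iSup_lt_ord ?_ fun x => hg _
    rw [Cardinal.mk_toType, omega2, isRegular_aleph_two.cof_eq, omega1, Cardinal.card_ord]
    exact aleph_lt_aleph.2 one_lt_two
  · intro j hj
    have h : g j = F ((Ordinal.ToType.mk (o := omega1)) ⟨j, hj⟩) := by simp [hF]
    rw [h]
    exact le_ciSup (Ordinal.bddAbove_range F) _

/-- the set of closure points of `g` below `ω₁` (positive and closed under successor). -/
def CS (g : Ordinal.{0} → Ordinal.{0}) : Set Ordinal.{0} :=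
  {i | i < omega1 ∧ 0 < i ∧ ∀ j < i, g j < i ∧ j + 1 < i}

lemma club_CS (g : Ordinal.{0} → Ordinal.{0}) (hg : ∀ j < omega1, g j < omega1) :
    ClubInOmega1 (CS g) := by
  refine ⟨fun o ho => ho.1, ?_, ?_⟩
  · -- unbounded
    intro a ha
    have step : ∀ c < omega1, ∃ d, c < d ∧ d < omega1 ∧ ∀ j < c, g j < d ∧ j + 1 < d := by
      intro c hc
      set S : Set Ordinal.{0} := (fun j => max (g j) (j + 1) + 1) '' Iio c with hS
      have hSc : S.Countable := (Iio_countable hc).image _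
      have hSb : ∀ x ∈ S, x < omega1 := by
        rintro x ⟨j, hj, rfl⟩
        have h1 : g j < omega1 := hg j (hj.trans hc)
        have h2 : j + 1 < omega1 := omega1_isLimit.succ_lt (hj.trans hc)
        exact omega1_isLimit.succ_lt (max_lt h1 h2)
      have hsup : sSup S < omega1 := sSup_lt_omega1 hSc hSb
      refine ⟨max (sSup S) (c + 1), lt_of_lt_of_le (lt_succ' c) (le_max_right _ _), ?_, ?_⟩
      · exact max_lt hsup (omega1_isLimit.succ_lt hc)
      · intro j hj
        have hmem : max (g j) (j + 1) + 1 ∈ S := ⟨j, hj, rfl⟩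
        have hb : BddAbove S := ⟨omega1, fun x hx => (hSb x hx).le⟩
        have h := (le_csSup hb hmem).trans (le_max_left (sSup S) (c+1))
        constructor
        · exact lt_of_le_of_lt (le_max_left (g j) (j+1)) (lt_of_lt_of_le (lt_succ' _) h)
        · exact lt_of_le_of_lt (le_max_right (g j) (j+1)) (lt_of_lt_of_le (lt_succ' _) h)
    choose! d hd1 hd2 hd3 using step
    set b : ℕ → Ordinal.{0} := fun n => (fun x => d x)^[n] (a + 1) with hb
    have hbs : ∀ n, b n < omega1 ∧ b n < b (n + 1) := by
      intro n
      induction n with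
      | zero =>
        have h0 : b 0 = a + 1 := rfl
        have h1 : b 0 < omega1 := by rw [h0]; exact omega1_isLimit.succ_lt ha
        have h2 : b 1 = d (b 0) := by
          simp [hb, Function.iterate_succ_apply']
        exact ⟨h1, by rw [h2]; exact hd1 _ h1⟩
      | succ n ih =>
        have h1 : b (n+1) = d (b n) := by simp [hb, Function.iterate_succ_apply']
        have h2 : b (n+1) < omega1 := by rw [h1]; exact hd2 _ ih.1
        have h3 : b (n+2) = d (b (n+1)) := by simp [hb, Function.iterate_succ_apply']
        exact ⟨h2, by rw [h3]; exact hd1 _ h2⟩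
    set i := ⨆ n, b n with hi
    have hib : ∀ n, b n ≤ i := fun n => le_ciSup (Ordinal.bddAbove_range b) n
    have hiw : i < omega1 := by
      refine Ordinal.iSup_lt_ord ?_ fun n => (hbs n).1
      rw [Cardinal.mk_nat, omega1, Cardinal.isRegular_aleph_one.cof_eq]
      exact aleph0_lt_aleph_one
    have hexn : ∀ j < i, ∃ n, j < b n := by
      intro j hj
      by_contra hcon
      push_neg at hcon
      exact absurd (ciSup_le hcon) (not_le.2 hj)
    refine ⟨i, ⟨hiw, ?_, ?_⟩, lt_of_lt_of_le (lt_succ' a) (hib 0)⟩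
    · exact lt_of_le_of_lt (zero_le (a := a)) (lt_of_lt_of_le (lt_succ' a) (hib 0))
    · intro j hj
      obtain ⟨n, hn⟩ := hexn j hj
      have h1 : b (n+1) = d (b n) := by simp [hb, Function.iterate_succ_apply']
      have h := hd3 _ (hbs n).1 j hn
      exact ⟨lt_of_lt_of_le (h1 ▸ h.1) (hib (n+1)),
        lt_of_lt_of_le (h1 ▸ h.2) (hib (n+1))⟩
  · -- closed
    rintro D hD ⟨d0, hd0⟩ ⟨b, hbw, hbd⟩
    have hbdd : BddAbove D := ⟨b, fun x hx => hbd x hx⟩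
    have h1 : sSup D < omega1 := lt_of_le_of_lt (csSup_le ⟨d0, hd0⟩ hbd) hbw
    have h2 : 0 < sSup D := lt_of_lt_of_le (hD hd0).2.1 (le_csSup hbdd hd0)
    refine ⟨h1, h2, ?_⟩
    intro j hj
    have hex : ∃ x ∈ D, j < x := by
      by_contra hcon
      push_neg at hcon
      exact absurd (csSup_le ⟨d0, hd0⟩ hcon) (not_le.2 hj)
    obtain ⟨x, hx, hjx⟩ := hex
    have hxs := (hD hx).2.2 j hjx
    exact ⟨lt_of_lt_of_le hxs.1 (le_csSup hbdd hx),
      lt_of_lt_of_le hxs.2 (le_csSup hbdd hx)⟩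

lemma cl_Iio_decomp {f : List Ordinal.{0} → Ordinal.{0}} {B : Set Ordinal.{0}} {i : Ordinal.{0}}
    (hi : 0 < i) (hsucc : ∀ j < i, j + 1 < i) :
    cl f (Iio i ∪ B) ⊆ ⋃ j ∈ Iio i, cl f (Iio j ∪ B) := by
  apply cl_min
  · rintro x (hx | hx)
    · exact mem_iUnion₂.2 ⟨x + 1, hsucc x hx, subset_cl (Or.inl (lt_succ' x))⟩
    · exact mem_iUnion₂.2 ⟨0, hi, subset_cl (Or.inr hx)⟩
  · have key : ∀ s : List Ordinal.{0}, (∀ x ∈ s, x ∈ ⋃ j ∈ Iio i, cl f (Iio j ∪ B)) →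
        ∃ j, j < i ∧ ∀ x ∈ s, x ∈ cl f (Iio j ∪ B) := by
      intro s
      induction s with
      | nil => exact fun _ => ⟨0, hi, by simp⟩
      | cons a l ih =>
        intro hs
        obtain ⟨j1, hj1, h1⟩ := ih (fun x hx => hs x (List.mem_cons_of_mem _ hx))
        obtain ⟨j2, hj2, h2⟩ := mem_iUnion₂.1 (hs a List.mem_cons_self)
        refine ⟨max j1 j2, max_lt hj1 hj2, ?_⟩
        intro x hx
        rcases List.mem_cons.1 hx with rfl | hx
        · exact cl_mono (union_subset_union_left B
            (fun y hy => lt_of_lt_of_le hy (le_max_right j1 j2))) h2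
        · exact cl_mono (union_subset_union_left B
            (fun y hy => lt_of_lt_of_le hy (le_max_left j1 j2))) (h1 x hx)
    intro s hs
    obtain ⟨j, hj, h⟩ := key s hs
    exact mem_iUnion₂.2 ⟨j, hj, closed_cl s h⟩

/-- the supremum of the countable-ordinal trace of the closure of `Iio j ∪ B`. -/
def htr (f : List Ordinal.{0} → Ordinal.{0}) (B : Set Ordinal.{0}) (j : Ordinal.{0}) :
    Ordinal.{0} :=
  sSup (cl f (Iio j ∪ B) ∩ {o | o < omega1})

lemma htr_lt (f : List Ordinal.{0} → Ordinal.{0}) {B : Set Ordinal.{0}} (hB : B.Countable)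
    {j : Ordinal.{0}} (hj : j < omega1) : htr f B j < omega1 :=
  sSup_lt_omega1 ((cl_countable ((Iio_countable hj).union hB)).mono inter_subset_left)
    (fun _ hx => hx.2)

lemma trace_subset {f : List Ordinal.{0} → Ordinal.{0}} {B : Set Ordinal.{0}} {i : Ordinal.{0}}
    (hi : 0 < i) (hsucc : ∀ j < i, j + 1 < i) (hcp : ∀ j < i, htr f B j < i) :
    cl f (Iio i ∪ B) ∩ {o | o < omega1} ⊆ Iio i := by
  rintro x ⟨hx1, hx2⟩
  obtain ⟨j, hj, hx⟩ := mem_iUnion₂.1 (cl_Iio_decomp hi hsucc hx1)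
  have hbdd : BddAbove (cl f (Iio j ∪ B) ∩ {o | o < omega1}) :=
    ⟨omega1, fun y hy => hy.2.le⟩
  exact lt_of_le_of_lt (le_csSup hbdd (Set.mem_inter hx hx2)) (hcp j hj)

lemma subset_clf (f : List Ordinal.{0} → Ordinal.{0}) (Z : Set Ordinal.{0}) : Z ⊆ clf f Z := by
  intro x hx
  rw [clf, mem_sInter]
  rintro W ⟨h1, _⟩
  exact h1 hx

lemma clf_subset {f : List Ordinal.{0} → Ordinal.{0}} {Z W : Set Ordinal.{0}}
    (h1 : Z ⊆ W) (h2 : ClosedUnder f W) : clf f Z ⊆ W :=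
  sInter_subset_of_mem ⟨h1, h2⟩

end PAux
end
/-- for every `f : ω₂^{<ω} → ω₂` and stationary `T ⊆ ω₁` there is a
countable `X ⊆ ω₂` closed under `f` with `X ∩ ω₁` an ordinal in `T`, such that for
cofinally many `β < ω₂` outside `X`, `cl_f(X ∪ {β}) ∩ ω₁ = X ∩ ω₁`. -/
theorem exists_model_with_cofinal_end_extensions
    (f : List Ordinal.{0} → Ordinal) (hf : IntoBelow omega2 f)
    (T : Set Ordinal.{0}) (hT : StationaryInOmega1 T) :
    ∃ X : Set Ordinal.{0}, X.Countable ∧ (∀ x ∈ X, x < omega2) ∧ ClosedUnder f X ∧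
      (∃ α ∈ T, X ∩ {o | o < omega1} = {o | o < α}) ∧
      ∀ γ < omega2, ∃ β, γ < β ∧ β < omega2 ∧ β ∉ X ∧
        clf f (X ∪ {β}) ∩ {o | o < omega1} = X ∩ {o | o < omega1} := by
  classical
  open PAux Set in
  have key : ∃ i, i ∈ T ∧ 0 < i ∧ (∀ j < i, j + 1 < i) ∧ (∀ j < i, PAux.htr f ∅ j < i) ∧
      (∀ γ < omega2, ∃ β, γ < β ∧ β < omega2 ∧ β ∉ PAux.cl f (Set.Iio i) ∧
        clf f (PAux.cl f (Set.Iio i) ∪ {β}) ∩ {o | o < omega1}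
          = PAux.cl f (Set.Iio i) ∩ {o | o < omega1}) := by
    by_contra H
    push_neg at H
    have H' : ∀ i, ∃ δ, δ < omega2 ∧ (i ∈ T → 0 < i → (∀ j < i, j + 1 < i) →
        (∀ j < i, PAux.htr f ∅ j < i) → ∀ β, δ < β → β < omega2 →
          β ∉ PAux.cl f (Set.Iio i) →
          clf f (PAux.cl f (Set.Iio i) ∪ {β}) ∩ {o | o < omega1}
            ≠ PAux.cl f (Set.Iio i) ∩ {o | o < omega1}) := by
      intro i
      by_cases h1 : i ∈ T
      · by_cases h2 : 0 < i
        · by_cases h3 : ∀ j < i, j + 1 < i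
          · by_cases h4 : ∀ j < i, PAux.htr f ∅ j < i
            · obtain ⟨γ, hγ, hβ⟩ := H i h1 h2 h3 h4
              exact ⟨γ, hγ, fun _ _ _ _ => hβ⟩
            · exact ⟨0, PAux.omega2_isLimit.pos, fun _ _ _ h => absurd h h4⟩
          · exact ⟨0, PAux.omega2_isLimit.pos, fun _ _ h _ => absurd h h3⟩
        · exact ⟨0, PAux.omega2_isLimit.pos, fun _ h _ _ => absurd h h2⟩
      · exact ⟨0, PAux.omega2_isLimit.pos, fun h _ _ _ => absurd h h1⟩
    choose δf hδf using H'
    obtain ⟨b1, hb1, hb1'⟩ := PAux.bound2 δf (fun j => (hδf j).1)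
    set σ : Ordinal.{0} → Ordinal.{0} :=
      fun i => if h : i < omega1 then sSup (PAux.cl f (Set.Iio i)) else 0 with hσdef
    have hσ : ∀ j, σ j < omega2 := by
      intro j
      by_cases h : j < omega1
      · rw [hσdef]
        simp only [dif_pos h]
        refine PAux.sSup_lt_omega2 (PAux.cl_countable (PAux.Iio_countable h)) ?_
        exact PAux.cl_lt hf (fun x hx =>
          lt_trans (lt_trans hx h) PAux.omega1_lt_omega2)
      · rw [hσdef]; simp only [dif_neg h]; exact PAux.omega2_isLimit.pos
    obtain ⟨b2, hb2, hb2'⟩ := PAux.bound2 σ hσ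
    set β := max b1 b2 + 1 with hβdef
    have hβ2 : β < omega2 := PAux.omega2_isLimit.succ_lt (max_lt hb1 hb2)
    have hclub := PAux.club_CS
      (fun j => max (PAux.htr f ∅ j) (PAux.htr f {β} j))
      (fun j hj => max_lt (PAux.htr_lt f Set.countable_empty hj)
        (PAux.htr_lt f (Set.countable_singleton β) hj))
    obtain ⟨i, hiT, hiC⟩ := hT.2 _ hclub
    obtain ⟨hiw, hipos, hicl⟩ := hiC
    have h3 : ∀ j < i, j + 1 < i := fun j hj => (hicl j hj).2
    have h4 : ∀ j < i, PAux.htr f ∅ j < i :=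
      fun j hj => lt_of_le_of_lt (le_max_left _ _) (hicl j hj).1
    have h4' : ∀ j < i, PAux.htr f {β} j < i :=
      fun j hj => lt_of_le_of_lt (le_max_right _ _) (hicl j hj).1
    have hXsub : PAux.cl f (Set.Iio i) ∪ {β} ⊆ PAux.cl f (Set.Iio i ∪ {β}) := by
      rintro x (hx | hx)
      · exact PAux.cl_mono Set.subset_union_left hx
      · exact PAux.subset_cl (Or.inr hx)
    have hgood : clf f (PAux.cl f (Set.Iio i) ∪ {β}) ∩ {o | o < omega1}
        = PAux.cl f (Set.Iio i) ∩ {o | o < omega1} := by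
      apply Set.Subset.antisymm
      · intro x hx
        have hx1 : x ∈ PAux.cl f (Set.Iio i ∪ {β}) :=
          PAux.clf_subset hXsub PAux.closed_cl hx.1
        have hxi : x ∈ Set.Iio i := PAux.trace_subset hipos h3 h4' ⟨hx1, hx.2⟩
        exact ⟨PAux.subset_cl hxi, hx.2⟩
      · intro x hx
        exact ⟨PAux.subset_clf f _ (Or.inl hx.1), hx.2⟩
    have hβX : β ∉ PAux.cl f (Set.Iio i) := by
      intro hmem
      have hb : β ≤ σ i := by
        have hσi : σ i = sSup (PAux.cl f (Set.Iio i)) := by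
          rw [hσdef]; simp only [dif_pos hiw]
        rw [hσi]
        refine le_csSup ⟨omega2, fun y hy => ?_⟩ hmem
        exact (PAux.cl_lt hf (fun x hx =>
          lt_trans (lt_trans hx hiw) PAux.omega1_lt_omega2) y hy).le
      have hb' : β ≤ b2 := hb.trans (hb2' i hiw)
      exact absurd hb' (not_le.2 (lt_of_le_of_lt (le_max_right b1 b2) (PAux.lt_succ' _)))
    have hδβ : δf i < β :=
      lt_of_le_of_lt ((hb1' i hiw).trans (le_max_left b1 b2)) (PAux.lt_succ' _)
    exact (hδf i).2 hiT hipos h3 h4 β hδβ hβ2 hβX hgood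
  obtain ⟨i, hiT, hipos, hisucc, hicp, hgood⟩ := key
  have hiw : i < omega1 := hT.1 i hiT
  refine ⟨PAux.cl f (Set.Iio i), PAux.cl_countable (PAux.Iio_countable hiw), ?_,
    PAux.closed_cl, ⟨i, hiT, ?_⟩, hgood⟩
  · exact PAux.cl_lt hf (fun x hx => lt_trans (lt_trans hx hiw) PAux.omega1_lt_omega2)
  · apply Set.Subset.antisymm
    · intro x hx
      have hx' : x ∈ PAux.cl f (Set.Iio i ∪ ∅) ∩ {o | o < omega1} := by
        rw [Set.union_empty]; exact hx
      exact PAux.trace_subset hipos hisucc hicp hx'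
    · intro x hx
      exact ⟨PAux.subset_cl hx, lt_trans hx hiw⟩
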